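/- Let f_W(x) = W^L ρ(W^{L-1} ⋯ ρ(W^1 x) ⋯) be an L-layer neural network with 1-Lipschitz activation ρ applied entrywise. Then for any x̂ ∈ B_x(ε_x) and every pair of output classes i, j: f^{ij}_W(x̂) − f^{ij}_W(x) ≤ ε_x ‖W^L_{i,:} − W^L_{j,:}‖_1 ∏_{m=1}^{L−1} ‖W^m‖_∞. -/
import Mathlib


/-- Vector ℓ1 norm: `‖v‖₁ = Σ_q |v_q|`. -/
noncomputable def vecL1 {n : ℕ} (v : Fin n → ℝ) : ℝ := ∑ q, |v q|

/-- Vector ℓ∞ norm: `‖v‖_∞ = max_q |v_q|`. -/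
noncomputable def vecLinf {n : ℕ} (v : Fin n → ℝ) : ℝ := ⨆ q, |v q|

/-- Matrix ℓ∞→ℓ∞ operator norm: `‖W‖_∞ = max_p Σ_q |W_{p,q}|`. -/
noncomputable def matLinf {m n : ℕ} (W : Matrix (Fin m) (Fin n) ℝ) : ℝ := ⨆ p, ∑ q, |W p q|

/-- Matrix ℓ1→ℓ1 operator norm: `‖W‖₁ = max_q Σ_p |W_{p,q}|`. -/
noncomputable def matL1 {m n : ℕ} (W : Matrix (Fin m) (Fin n) ℝ) : ℝ := ⨆ q, ∑ p, |W p q|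

/-- `zLayer d ρ W k x` is the `k`-th zLayer-layer output
`z^k_W(x) = ρ(W^k ⋯ ρ(W^1 x) ⋯)`, with `z^0_W(x) = x`.
Here `W k` denotes the paper's weight matrix `W^{k+1}`
(so `W : ∀ k, Matrix (Fin (d (k+1))) (Fin (d k)) ℝ` lists `W^1, W^2, …`). -/
noncomputable def zLayer (d : ℕ → ℕ) (ρ : ℝ → ℝ)
    (W : ∀ k, Matrix (Fin (d (k + 1))) (Fin (d k)) ℝ) :
    (k : ℕ) → (Fin (d 0) → ℝ) → Fin (d k) → ℝ
  | 0, x => x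
  | k + 1, x => fun p => ρ ((W k).mulVec (zLayer d ρ W k x) p)

/-- `nnet d ρ W k x = (W^{k+1}) z^k_W(x)` is the output of the `(k+1)`-layer network
`f_W(x) = W^{k+1} ρ(W^k ⋯ ρ(W^1 x) ⋯)`.  In particular `nnet d ρ W (L-1)` is the
paper's `L`-layer network. -/
noncomputable def nnet (d : ℕ → ℕ) (ρ : ℝ → ℝ)
    (W : ∀ k, Matrix (Fin (d (k + 1))) (Fin (d k)) ℝ) (k : ℕ)
    (x : Fin (d 0) → ℝ) : Fin (d (k + 1)) → ℝ :=
  (W k).mulVec (zLayer d ρ W k x)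

lemma matLinf_nonneg {m n : ℕ} (W : Matrix (Fin m) (Fin n) ℝ) : 0 ≤ matLinf W :=
  Real.iSup_nonneg fun p => Finset.sum_nonneg fun q _ => abs_nonneg _

lemma row_le_matLinf {m n : ℕ} (W : Matrix (Fin m) (Fin n) ℝ) (p : Fin m) :
    ∑ q, |W p q| ≤ matLinf W := by
  unfold matLinf
  exact le_ciSup (f := fun p => ∑ q, |W p q|) (Set.finite_range _).bddAbove p

lemma zLayer_diff (d : ℕ → ℕ) (ρ : ℝ → ℝ)
    (hρ_lip : ∀ s t, |ρ s - ρ t| ≤ |s - t|)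
    (W : ∀ k, Matrix (Fin (d (k + 1))) (Fin (d k)) ℝ)
    (εx : ℝ) (hεx : 0 ≤ εx)
    (x xhat : Fin (d 0) → ℝ) (hx : ∀ q, |xhat q - x q| ≤ εx) :
    ∀ k q, |zLayer d ρ W k xhat q - zLayer d ρ W k x q| ≤
      εx * ∏ m ∈ Finset.range k, matLinf (W m) := by
  intro k
  induction k with
  | zero => intro q; simpa [zLayer] using hx q
  | succ k ih =>
    intro p
    have hC : 0 ≤ εx * ∏ m ∈ Finset.range k, matLinf (W m) :=
      mul_nonneg hεx (Finset.prod_nonneg fun m _ => matLinf_nonneg _)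
    calc |zLayer d ρ W (k+1) xhat p - zLayer d ρ W (k+1) x p|
        ≤ |(W k).mulVec (zLayer d ρ W k xhat) p - (W k).mulVec (zLayer d ρ W k x) p| := by
          simpa [zLayer] using hρ_lip ((W k).mulVec (zLayer d ρ W k xhat) p)
            ((W k).mulVec (zLayer d ρ W k x) p)
      _ = |∑ q, W k p q * (zLayer d ρ W k xhat q - zLayer d ρ W k x q)| := by
          simp [Matrix.mulVec, dotProduct, mul_sub, Finset.sum_sub_distrib]
      _ ≤ ∑ q, |W k p q * (zLayer d ρ W k xhat q - zLayer d ρ W k x q)| :=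
          Finset.abs_sum_le_sum_abs _ _
      _ ≤ ∑ q, |W k p q| * (εx * ∏ m ∈ Finset.range k, matLinf (W m)) := by
          refine Finset.sum_le_sum fun q _ => ?_
          rw [abs_mul]
          exact mul_le_mul_of_nonneg_left (ih q) (abs_nonneg _)
      _ = (∑ q, |W k p q|) * (εx * ∏ m ∈ Finset.range k, matLinf (W m)) := by
          rw [Finset.sum_mul]
      _ ≤ matLinf (W k) * (εx * ∏ m ∈ Finset.range k, matLinf (W m)) :=
          mul_le_mul_of_nonneg_right (row_le_matLinf _ p) hC
      _ = εx * ∏ m ∈ Finset.range (k+1), matLinf (W m) := by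
          rw [Finset.prod_range_succ]; ring

/-- for an `L`-layer network with `1`-Lipschitz activation and any
`x̂ ∈ B_x(ε_x)`:
`f^{ij}_W(x̂) − f^{ij}_W(x) ≤ ε_x ‖W^L_{i,:} − W^L_{j,:}‖_1 ∏_{m=1}^{L−1} ‖W^m‖_∞`.
(`W k` is the paper's `W^{k+1}`; the `L`-layer network is `nnet d ρ W (L-1)`.) -/
theorem statement13 (d : ℕ → ℕ) (ρ : ℝ → ℝ)
    (hρ_lip : ∀ s t, |ρ s - ρ t| ≤ |s - t|)
    (L : ℕ) (hL : 1 ≤ L)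
    (W : ∀ k, Matrix (Fin (d (k + 1))) (Fin (d k)) ℝ)
    (εx : ℝ) (hεx : 0 ≤ εx)
    (x xhat : Fin (d 0) → ℝ) (hx : ∀ q, |xhat q - x q| ≤ εx)
    (i j : Fin (d (L - 1 + 1))) :
    (nnet d ρ W (L - 1) xhat i - nnet d ρ W (L - 1) xhat j) -
        (nnet d ρ W (L - 1) x i - nnet d ρ W (L - 1) x j) ≤
      εx * vecL1 (fun q => W (L - 1) i q - W (L - 1) j q) *
        ∏ m ∈ Finset.range (L - 1), matLinf (W m) := by
  revert i j
  generalize L - 1 = k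
  intro i j
  have hz := zLayer_diff d ρ hρ_lip W εx hεx x xhat hx k
  have hC : 0 ≤ εx * ∏ m ∈ Finset.range k, matLinf (W m) :=
    mul_nonneg hεx (Finset.prod_nonneg fun m _ => matLinf_nonneg _)
  calc (nnet d ρ W k xhat i - nnet d ρ W k xhat j) -
        (nnet d ρ W k x i - nnet d ρ W k x j)
      = ∑ q, (W k i q - W k j q) * (zLayer d ρ W k xhat q - zLayer d ρ W k x q) := by
        simp [nnet, Matrix.mulVec, dotProduct, sub_mul, mul_sub, Finset.sum_sub_distrib]
    _ ≤ ∑ q, |(W k i q - W k j q) * (zLayer d ρ W k xhat q - zLayer d ρ W k x q)| :=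
        Finset.sum_le_sum fun q _ => le_abs_self _
    _ ≤ ∑ q, |W k i q - W k j q| * (εx * ∏ m ∈ Finset.range k, matLinf (W m)) := by
        refine Finset.sum_le_sum fun q _ => ?_
        rw [abs_mul]
        exact mul_le_mul_of_nonneg_left (hz q) (abs_nonneg _)
    _ = (∑ q, |W k i q - W k j q|) * (εx * ∏ m ∈ Finset.range k, matLinf (W m)) := by
        rw [Finset.sum_mul]
    _ = εx * vecL1 (fun q => W k i q - W k j q) * ∏ m ∈ Finset.range k, matLinf (W m) := by
        simp [vecL1]; ring
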